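/- Let H_A ⊗ H_B be a finite-dimensional bipartite complex Hilbert space, |φ⟩ ∈ H_A ⊗ H_B a unit vector, σ a density matrix on H_A ⊗ H_B, and let ρ = (1 − λ)|φ⟩⟨φ| + λσ with 0 ≤ λ ≤ ε ≤ 1. Then |S(Tr_A ρ) − S(Tr_A |φ⟩⟨φ|)| ≤ ε·log₂(dim H_B) + 1. -/

import Mathlib

open scoped BigOperators ComplexOrder
open Classical

noncomputable section
namespace QI

/-- The outer product `|v⟩⟨v|` of a vector with itself. -/
def outer {A : Type*} [Fintype A] (v : A → ℂ) : Matrix A A ℂ :=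
  Matrix.of fun i j => v i * (starRingEnd ℂ) (v j)

/-- The quadratic form `⟨v| M |v⟩`. -/
def qform {A : Type*} [Fintype A] (M : Matrix A A ℂ) (v : A → ℂ) : ℂ :=
  ∑ i, ∑ j, (starRingEnd ℂ) (v i) * M i j * v j

/-- The inner product `⟨v|w⟩` (antilinear in the first argument). -/
def inner' {A : Type*} [Fintype A] (v w : A → ℂ) : ℂ :=
  ∑ i, (starRingEnd ℂ) (v i) * w i

/-- A density matrix: positive semidefinite with trace one. -/
def IsDensityMatrix {A : Type*} [Fintype A] (ρ : Matrix A A ℂ) : Prop :=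
  ρ.PosSemidef ∧ ρ.trace = 1

/-- Partial trace over the first tensor factor (`Tr_A`). -/
def ptraceA {A B : Type*} [Fintype A] [Fintype B]
    (M : Matrix (A × B) (A × B) ℂ) : Matrix B B ℂ :=
  Matrix.of fun i j => ∑ a, M (a, i) (a, j)

/-- Partial trace over the second tensor factor (`Tr_B`). -/
def ptraceB {A B : Type*} [Fintype A] [Fintype B]
    (M : Matrix (A × B) (A × B) ℂ) : Matrix A A ℂ :=
  Matrix.of fun i j => ∑ b, M (i, b) (j, b)

/-- The von Neumann entropy (base 2) of a matrix, via its eigenvalues;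
`0` if the matrix is not Hermitian.  The convention `0 · log₂ 0 = 0` holds
since `Real.logb 2 0 = 0`. -/
def vnEntropy {A : Type*} [Fintype A] [DecidableEq A] (ρ : Matrix A A ℂ) : ℝ :=
  if h : ρ.IsHermitian then -∑ i, h.eigenvalues i * Real.logb 2 (h.eigenvalues i) else 0

section Aux
open Real Finset

lemma negMulLog_add_le {x y : ℝ} (hx : 0 ≤ x) (hy : 0 ≤ y) :
    Real.negMulLog (x + y) ≤ Real.negMulLog x + Real.negMulLog y := by
  rcases eq_or_lt_of_le hx with h | hxpos
  · simp [← h]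
  rcases eq_or_lt_of_le hy with h | hypos
  · simp [← h]
  have h1 : Real.log x ≤ Real.log (x + y) := Real.log_le_log hxpos (by linarith)
  have h2 : Real.log y ≤ Real.log (x + y) := Real.log_le_log hypos (by linarith)
  simp only [Real.negMulLog, neg_mul]
  nlinarith

lemma binEntropy_eq (p : ℝ) :
    Real.binEntropy p = Real.negMulLog p + Real.negMulLog (1 - p) := by
  simp [Real.binEntropy, Real.negMulLog, Real.log_inv]; ring

lemma maxent {B : Type*} [Fintype B] [Nonempty B] {p : B → ℝ}
    (h0 : ∀ i, 0 ≤ p i) (h1 : ∑ i, p i = 1) :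
    ∑ i, Real.negMulLog (p i) ≤ Real.log (Fintype.card B) := by
  have hd : (0:ℝ) < (Fintype.card B : ℝ) := by
    exact_mod_cast Fintype.card_pos
  have hJ := Real.concaveOn_negMulLog.le_map_sum
    (t := Finset.univ) (w := fun _ : B => ((Fintype.card B : ℝ))⁻¹) (p := p)
    (fun i _ => by positivity)
    (by simp)
    (fun i _ => h0 i)
  simp only [smul_eq_mul, ← Finset.mul_sum, h1, mul_one] at hJ
  have : Real.negMulLog ((Fintype.card B : ℝ))⁻¹
      = ((Fintype.card B : ℝ))⁻¹ * Real.log (Fintype.card B) := by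
    simp [Real.negMulLog, Real.log_inv]
  rw [this] at hJ
  calc ∑ i, Real.negMulLog (p i)
      = (Fintype.card B : ℝ) * (((Fintype.card B : ℝ))⁻¹ * ∑ i, Real.negMulLog (p i)) := by
        field_simp
    _ ≤ (Fintype.card B : ℝ) * (((Fintype.card B : ℝ))⁻¹ * Real.log (Fintype.card B)) := by
        apply mul_le_mul_of_nonneg_left _ hd.le
        exact hJ
    _ = Real.log (Fintype.card B) := by field_simp

lemma ent_nonneg {B : Type*} [Fintype B] {p : B → ℝ}
    (h0 : ∀ i, 0 ≤ p i) (h1 : ∑ i, p i = 1) :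
    0 ≤ ∑ i, Real.negMulLog (p i) := by
  apply Finset.sum_nonneg
  intro i _
  apply Real.negMulLog_nonneg (h0 i)
  calc p i ≤ ∑ j, p j := Finset.single_le_sum (fun j _ => h0 j) (Finset.mem_univ i)
    _ = 1 := h1

lemma vnEntropy_eq {B : Type*} [Fintype B] [DecidableEq B] {τ : Matrix B B ℂ}
    (h : τ.IsHermitian) :
    vnEntropy τ = (∑ i, Real.negMulLog (h.eigenvalues i)) / Real.log 2 := by
  rw [vnEntropy, dif_pos h, Finset.sum_div, ← Finset.sum_neg_distrib]
  apply Finset.sum_congr rfl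
  intro i _
  simp [Real.negMulLog, Real.logb]
  ring


section Mat
open Matrix
variable {A B : Type*} [Fintype A] [Fintype B]

lemma ptraceA_posSemidef {M : Matrix (A × B) (A × B) ℂ} (hM : M.PosSemidef) :
    (ptraceA M).PosSemidef := by
  obtain ⟨N, rfl⟩ : ∃ N : Matrix (A × B) (A × B) ℂ, M = Nᴴ * N := by
    open scoped MatrixOrder in exact CStarAlgebra.nonneg_iff_eq_star_mul_self.mp hM.nonneg
  have : ptraceA (Nᴴ * N) =
      (Matrix.of fun (p : (A × B) × A) (i : B) => N p.1 (p.2, i))ᴴ *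
      (Matrix.of fun (p : (A × B) × A) (i : B) => N p.1 (p.2, i)) := by
    ext i j
    simp only [ptraceA, Matrix.mul_apply, Matrix.conjTranspose_apply, Matrix.of_apply]
    rw [Fintype.sum_prod_type]
    rw [Finset.sum_comm]
  rw [this]
  exact Matrix.posSemidef_conjTranspose_mul_self _

lemma ptraceA_trace (M : Matrix (A × B) (A × B) ℂ) :
    (ptraceA M).trace = M.trace := by
  simp only [Matrix.trace, Matrix.diag, ptraceA, Matrix.of_apply]
  rw [Fintype.sum_prod_type, Finset.sum_comm]

lemma ptraceA_lin (c d : ℂ) (M N : Matrix (A × B) (A × B) ℂ) :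
    ptraceA (c • M + d • N) = c • ptraceA M + d • ptraceA N := by
  ext i j
  simp [ptraceA, Finset.mul_sum, Finset.sum_add_distrib]

lemma outer_posSemidef (v : A → ℂ) : (outer v).PosSemidef := by
  rw [Matrix.posSemidef_iff_dotProduct_mulVec]
  constructor
  · ext i j
    simp only [outer, Matrix.conjTranspose_apply, Matrix.of_apply, star_mul', RingHomCompTriple.comp_apply]
    simp [mul_comm]
  · intro x
    have key : dotProduct (star x) (outer v *ᵥ x)
        = star (∑ i, (starRingEnd ℂ) (v i) * x i) * ∑ i, (starRingEnd ℂ) (v i) * x i := by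
      simp only [dotProduct, Matrix.mulVec, outer, Matrix.of_apply,
        Pi.star_apply, star_sum, star_mul', Complex.star_def, Complex.conj_conj]
      rw [Finset.sum_mul]
      refine Finset.sum_congr rfl fun j _ => ?_
      rw [Finset.mul_sum, Finset.mul_sum]
      refine Finset.sum_congr rfl fun i _ => ?_
      ring
    rw [key]
    exact star_mul_self_nonneg _

lemma outer_trace (v : A → ℂ) : (outer v).trace = inner' v v := by
  simp only [Matrix.trace, Matrix.diag, outer, Matrix.of_apply, inner']
  exact Finset.sum_congr rfl fun i _ => mul_comm _ _

lemma smul_posSemidef {c : ℝ} (hc : 0 ≤ c) {M : Matrix B B ℂ} (hM : M.PosSemidef) :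
    ((c : ℂ) • M).PosSemidef := by
  rw [Matrix.posSemidef_iff_dotProduct_mulVec]
  constructor
  · ext i j
    simp only [Matrix.conjTranspose_apply, Matrix.smul_apply, star_smul, Complex.star_def,
      Complex.conj_ofReal, smul_eq_mul]
    rw [_root_.map_mul, Complex.conj_ofReal, ← Complex.star_def, ← hM.1.apply i j]
  · intro x
    rw [Matrix.smul_mulVec, dotProduct_smul]
    have h1 : (0:ℂ) ≤ (c : ℂ) := by exact_mod_cast Complex.zero_le_real.mpr hc
    exact mul_nonneg h1 (hM.dotProduct_mulVec_nonneg x)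

end Mat

section Spec
open Matrix Real
variable {B : Type*} [Fintype B] [DecidableEq B]

/-- Real diagonal entries of `M` in the basis given by the unitary `V`. -/
def diagIn (V : Matrix.unitaryGroup B ℂ) (M : Matrix B B ℂ) (i : B) : ℝ :=
  ((star (V : Matrix B B ℂ) * M * (V : Matrix B B ℂ)) i i).re

lemma diagIn_sum (V : Matrix.unitaryGroup B ℂ) (M : Matrix B B ℂ) :
    ∑ i, diagIn V M i = M.trace.re := by
  have h : (star (V : Matrix B B ℂ) * M * (V : Matrix B B ℂ)).trace = M.trace := by
    rw [Matrix.trace_mul_cycle]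
    rw [show (V : Matrix B B ℂ) * star (V : Matrix B B ℂ) = 1 from Unitary.coe_mul_star_self V]
    rw [one_mul]
  simp only [diagIn, ← Complex.re_sum]
  exact congrArg Complex.re h

lemma diagIn_lin (V : Matrix.unitaryGroup B ℂ) (c d : ℝ) (M N : Matrix B B ℂ) (i : B) :
    diagIn V ((c : ℂ) • M + (d : ℂ) • N) i = c * diagIn V M i + d * diagIn V N i := by
  have h : star (V : Matrix B B ℂ) * ((c : ℂ) • M + (d : ℂ) • N) * (V : Matrix B B ℂ)
      = (c : ℂ) • (star (V : Matrix B B ℂ) * M * (V : Matrix B B ℂ))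
        + (d : ℂ) • (star (V : Matrix B B ℂ) * N * (V : Matrix B B ℂ)) := by
    rw [Matrix.mul_add, Matrix.add_mul, Matrix.mul_smul, Matrix.mul_smul,
      Matrix.smul_mul, Matrix.smul_mul]
  simp only [diagIn, h, Matrix.add_apply, Matrix.smul_apply, smul_eq_mul,
    Complex.add_re, Complex.re_ofReal_mul]

/-- The diagonal of a Hermitian matrix in a unitary basis is given by a doubly
stochastic mixing of the eigenvalues. -/
lemma diagIn_weights {M : Matrix B B ℂ} (hM : M.IsHermitian) (V : Matrix.unitaryGroup B ℂ) :
    ∃ w : B → B → ℝ, (∀ i j, 0 ≤ w i j) ∧ (∀ i, ∑ j, w i j = 1) ∧ (∀ j, ∑ i, w i j = 1) ∧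
      (∀ i, diagIn V M i = ∑ j, w i j * hM.eigenvalues j) := by
  set W : Matrix B B ℂ := (hM.eigenvectorUnitary : Matrix B B ℂ) with hW
  set X : Matrix B B ℂ := star (V : Matrix B B ℂ) * W with hX
  refine ⟨fun i j => Complex.normSq (X i j), fun i j => Complex.normSq_nonneg _, ?_, ?_, ?_⟩
  · -- row sums: X * star X = 1
    intro i
    have h1 : X * star X = 1 := by
      rw [hX, Matrix.star_mul, star_star, Matrix.mul_assoc, ← Matrix.mul_assoc W,
        show W * star W = 1 from Unitary.coe_mul_star_self _, Matrix.one_mul,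
        show star (V : Matrix B B ℂ) * (V : Matrix B B ℂ) = 1 from
          Unitary.coe_star_mul_self V]
    have h2 : (X * star X) i i = 1 := by rw [h1]; simp
    rw [Matrix.mul_apply] at h2
    have h3 : ∀ j, X i j * star X j i = (Complex.normSq (X i j) : ℂ) := by
      intro j
      rw [Matrix.star_apply, Complex.star_def, Complex.mul_conj]
    rw [Finset.sum_congr rfl (fun j _ => h3 j)] at h2
    have := congrArg Complex.re h2
    rwa [Complex.re_sum, Complex.one_re,
      Finset.sum_congr rfl (fun j _ => Complex.ofReal_re _)] at this
  · -- column sums: star X * X = 1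
    intro j
    have h1 : star X * X = 1 := by
      rw [hX, Matrix.star_mul, star_star, Matrix.mul_assoc, ← Matrix.mul_assoc (V : Matrix B B ℂ),
        show (V : Matrix B B ℂ) * star (V : Matrix B B ℂ) = 1 from
          Unitary.coe_mul_star_self V, Matrix.one_mul,
        show star W * W = 1 from Unitary.coe_star_mul_self _]
    have h2 : (star X * X) j j = 1 := by rw [h1]; simp
    rw [Matrix.mul_apply] at h2
    have h3 : ∀ i, star X j i * X i j = (Complex.normSq (X i j) : ℂ) := by
      intro i
      rw [Matrix.star_apply, Complex.star_def, mul_comm, Complex.mul_conj]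
    rw [Finset.sum_congr rfl (fun i _ => h3 i)] at h2
    have := congrArg Complex.re h2
    rwa [Complex.re_sum, Complex.one_re,
      Finset.sum_congr rfl (fun i _ => Complex.ofReal_re _)] at this
  · -- the diagonal formula
    intro i
    have hs : star (V : Matrix B B ℂ) * M * (V : Matrix B B ℂ)
        = X * Matrix.diagonal (RCLike.ofReal ∘ hM.eigenvalues) * star X := by
      conv_lhs => rw [hM.spectral_theorem, Unitary.conjStarAlgAut_apply]
      rw [hX, Matrix.star_mul, star_star, ← hW]
      noncomm_ring
    rw [diagIn, hs, Matrix.mul_apply]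
    rw [Complex.re_sum]
    refine Finset.sum_congr rfl fun j _ => ?_
    rw [Matrix.mul_diagonal, Matrix.star_apply, Complex.star_def]
    simp only [Function.comp_apply]
    have : X i j * RCLike.ofReal (hM.eigenvalues j) * (starRingEnd ℂ) (X i j)
        = ((Complex.normSq (X i j) * hM.eigenvalues j : ℝ) : ℂ) := by
      have hc : (RCLike.ofReal (hM.eigenvalues j) : ℂ) = ((hM.eigenvalues j : ℝ) : ℂ) := rfl
      rw [hc]
      push_cast
      rw [← Complex.mul_conj]
      ring
    rw [this]
    simp [mul_comm]

lemma diagIn_self {M : Matrix B B ℂ} (hM : M.IsHermitian) (i : B) :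
    diagIn hM.eigenvectorUnitary M i = hM.eigenvalues i := by
  rw [diagIn, ← Unitary.conjStarAlgAut_star_apply (S := ℂ), hM.conjStarAlgAut_star_eigenvectorUnitary]
  simp [Matrix.diagonal_apply_eq]

lemma sum_eigenvalues_eq {M : Matrix B B ℂ} (hM : M.IsHermitian) :
    ∑ i, hM.eigenvalues i = M.trace.re := by
  rw [← diagIn_sum hM.eigenvectorUnitary M]
  exact Finset.sum_congr rfl fun i _ => (diagIn_self hM i).symm

lemma diagIn_nonneg {M : Matrix B B ℂ} (hM : M.PosSemidef) (V : Matrix.unitaryGroup B ℂ)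
    (i : B) : 0 ≤ diagIn V M i := by
  obtain ⟨w, hw0, hw1, hw2, hwd⟩ := diagIn_weights hM.1 V
  rw [hwd i]
  exact Finset.sum_nonneg fun j _ => mul_nonneg (hw0 i j) (hM.eigenvalues_nonneg j)

/-- Schur: the entropy of the eigenvalues is at most the entropy of the diagonal
in any unitary basis. -/
lemma schur_entropy {M : Matrix B B ℂ} (hM : M.PosSemidef) (V : Matrix.unitaryGroup B ℂ) :
    ∑ j, Real.negMulLog (hM.1.eigenvalues j) ≤ ∑ i, Real.negMulLog (diagIn V M i) := by
  obtain ⟨w, hw0, hw1, hw2, hwd⟩ := diagIn_weights hM.1 V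
  calc ∑ j, Real.negMulLog (hM.1.eigenvalues j)
      = ∑ j, (∑ i, w i j) * Real.negMulLog (hM.1.eigenvalues j) := by
        refine Finset.sum_congr rfl fun j _ => ?_
        rw [hw2 j, one_mul]
    _ = ∑ i, ∑ j, w i j * Real.negMulLog (hM.1.eigenvalues j) := by
        rw [Finset.sum_comm]
        refine Finset.sum_congr rfl fun j _ => ?_
        rw [Finset.sum_mul]
    _ ≤ ∑ i, Real.negMulLog (diagIn V M i) := by
        refine Finset.sum_le_sum fun i _ => ?_
        rw [hwd i]
        have := Real.concaveOn_negMulLog.le_map_sum (t := Finset.univ)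
          (w := w i) (p := hM.1.eigenvalues) (fun j _ => hw0 i j) (hw1 i)
          (fun j _ => hM.eigenvalues_nonneg j)
        simpa only [smul_eq_mul] using this

end Spec

end Aux

/-- **Eq. (plan1).** For `ρ = (1-λ)|φ⟩⟨φ| + λσ` with `0 ≤ λ ≤ ε ≤ 1`, the entropy of the
reduced state of `ρ` on the second factor is within `ε log₂ (dim H_B) + 1` of that of the
reduced state of `|φ⟩⟨φ|`. -/
theorem entropy_reduced_mixture_close
    {A B : Type*} [Fintype A] [Fintype B] [DecidableEq B]
    (φ : A × B → ℂ) (hφ : inner' φ φ = 1)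
    (σ : Matrix (A × B) (A × B) ℂ) (hσ : IsDensityMatrix σ)
    (lam ε : ℝ) (h0 : 0 ≤ lam) (h1 : lam ≤ ε) (h2 : ε ≤ 1) :
    |vnEntropy (ptraceA (((1 - lam : ℝ) : ℂ) • outer φ + ((lam : ℝ) : ℂ) • σ)) -
        vnEntropy (ptraceA (outer φ))| ≤
      ε * Real.logb 2 (Fintype.card B) + 1 := by
  have hlam1 : lam ≤ 1 := le_trans h1 h2
  set φB : Matrix B B ℂ := ptraceA (outer φ) with hφBdef
  set σB : Matrix B B ℂ := ptraceA σ with hσBdef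
  set ρB : Matrix B B ℂ :=
    ptraceA (((1 - lam : ℝ) : ℂ) • outer φ + ((lam : ℝ) : ℂ) • σ) with hρBdef
  have hρB_eq : ρB = ((1 - lam : ℝ) : ℂ) • φB + ((lam : ℝ) : ℂ) • σB :=
    ptraceA_lin _ _ _ _
  have hφBpsd : φB.PosSemidef := ptraceA_posSemidef (outer_posSemidef φ)
  have hφBtr : φB.trace = 1 := by rw [hφBdef, ptraceA_trace, outer_trace, hφ]
  have hσBpsd : σB.PosSemidef := ptraceA_posSemidef hσ.1
  have hσBtr : σB.trace = 1 := by rw [hσBdef, ptraceA_trace, hσ.2]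
  have hρBpsd : ρB.PosSemidef := by
    rw [hρB_eq]
    exact Matrix.PosSemidef.add (smul_posSemidef (by linarith) hφBpsd)
      (smul_posSemidef h0 hσBpsd)
  have hρBtr : ρB.trace = 1 := by
    rw [hρB_eq, Matrix.trace_add, Matrix.trace_smul, Matrix.trace_smul, hφBtr, hσBtr]
    simp only [smul_eq_mul, mul_one]
    push_cast
    ring
  have hB : Nonempty B := by
    by_contra h
    rw [not_nonempty_iff] at h
    have h0' : φB.trace = 0 := by
      simp [Matrix.trace]
    rw [hφBtr] at h0'
    exact one_ne_zero h0'
  -- eigenvalue probability distributions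
  have hν0 : ∀ i, 0 ≤ hφBpsd.1.eigenvalues i := hφBpsd.eigenvalues_nonneg
  have hν1 : ∑ i, hφBpsd.1.eigenvalues i = 1 := by
    rw [sum_eigenvalues_eq hφBpsd.1, hφBtr, Complex.one_re]
  have hμ0 : ∀ i, 0 ≤ hρBpsd.1.eigenvalues i := hρBpsd.eigenvalues_nonneg
  have hμ1 : ∑ i, hρBpsd.1.eigenvalues i = 1 := by
    rw [sum_eigenvalues_eq hρBpsd.1, hρBtr, Complex.one_re]
  set Sν : ℝ := ∑ i, Real.negMulLog (hφBpsd.1.eigenvalues i) with hSν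
  set Sμ : ℝ := ∑ i, Real.negMulLog (hρBpsd.1.eigenvalues i) with hSμ
  set L : ℝ := Real.log (Fintype.card B) with hL
  have hL0 : 0 ≤ L := Real.log_nonneg (by exact_mod_cast Fintype.card_pos)
  have hSν0 : 0 ≤ Sν := ent_nonneg hν0 hν1
  have hSνL : Sν ≤ L := maxent hν0 hν1
  have hlog2 : (0:ℝ) < Real.log 2 := Real.log_pos one_lt_two
  -- Upper bound: Sμ ≤ Sν + lam * L + log 2
  have hupper : Sμ ≤ Sν + lam * L + Real.log 2 := by
    set V := hφBpsd.1.eigenvectorUnitary with hV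
    have hs0 : ∀ i, 0 ≤ diagIn V σB i := diagIn_nonneg hσBpsd V
    have hs1 : ∑ i, diagIn V σB i = 1 := by
      rw [diagIn_sum, hσBtr, Complex.one_re]
    have hq : ∀ i, diagIn V ρB i
        = (1 - lam) * hφBpsd.1.eigenvalues i + lam * diagIn V σB i := by
      intro i
      rw [hρB_eq, diagIn_lin V (1 - lam) lam φB σB i, hV, diagIn_self hφBpsd.1]
    have step1 : Sμ ≤ ∑ i, Real.negMulLog (diagIn V ρB i) := schur_entropy hρBpsd V
    have step2 : ∀ i, Real.negMulLog (diagIn V ρB i)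
        ≤ ((1 - lam) * Real.negMulLog (hφBpsd.1.eigenvalues i)
            + hφBpsd.1.eigenvalues i * Real.negMulLog (1 - lam))
          + (lam * Real.negMulLog (diagIn V σB i)
            + diagIn V σB i * Real.negMulLog lam) := by
      intro i
      rw [hq i]
      calc Real.negMulLog ((1 - lam) * hφBpsd.1.eigenvalues i + lam * diagIn V σB i)
          ≤ Real.negMulLog ((1 - lam) * hφBpsd.1.eigenvalues i)
            + Real.negMulLog (lam * diagIn V σB i) :=
            negMulLog_add_le (mul_nonneg (by linarith) (hν0 i))
              (mul_nonneg h0 (hs0 i))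
        _ = _ := by
            rw [Real.negMulLog_mul, Real.negMulLog_mul]
            ring
    have step3 : ∑ i, Real.negMulLog (diagIn V ρB i)
        ≤ (1 - lam) * Sν + Real.negMulLog (1 - lam)
          + lam * (∑ i, Real.negMulLog (diagIn V σB i)) + Real.negMulLog lam := by
      calc ∑ i, Real.negMulLog (diagIn V ρB i)
          ≤ ∑ i, (((1 - lam) * Real.negMulLog (hφBpsd.1.eigenvalues i)
            + hφBpsd.1.eigenvalues i * Real.negMulLog (1 - lam))
          + (lam * Real.negMulLog (diagIn V σB i)
            + diagIn V σB i * Real.negMulLog lam)) :=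
            Finset.sum_le_sum fun i _ => step2 i
        _ = (1 - lam) * Sν + (∑ i, hφBpsd.1.eigenvalues i) * Real.negMulLog (1 - lam)
          + lam * (∑ i, Real.negMulLog (diagIn V σB i))
          + (∑ i, diagIn V σB i) * Real.negMulLog lam := by
            simp only [Finset.sum_add_distrib, ← Finset.mul_sum, ← Finset.sum_mul, hSν]
            ring
        _ = (1 - lam) * Sν + Real.negMulLog (1 - lam)
          + lam * (∑ i, Real.negMulLog (diagIn V σB i)) + Real.negMulLog lam := by
            rw [hν1, hs1, one_mul, one_mul]
    have hent : ∑ i, Real.negMulLog (diagIn V σB i) ≤ L := maxent hs0 hs1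
    have hbin : Real.negMulLog lam + Real.negMulLog (1 - lam) ≤ Real.log 2 := by
      rw [← binEntropy_eq]
      exact Real.binEntropy_le_log_two
    have hlamL : lam * (∑ i, Real.negMulLog (diagIn V σB i)) ≤ lam * L :=
      mul_le_mul_of_nonneg_left hent h0
    nlinarith [mul_nonneg h0 hSν0]
  -- Lower bound: Sν - lam * L ≤ Sμ
  have hlower : Sν - lam * L ≤ Sμ := by
    set V := hρBpsd.1.eigenvectorUnitary with hV
    have ht0 : ∀ i, 0 ≤ diagIn V φB i := diagIn_nonneg hφBpsd V
    have hs'0 : ∀ i, 0 ≤ diagIn V σB i := diagIn_nonneg hσBpsd V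
    have hs'1 : ∑ i, diagIn V σB i = 1 := by
      rw [diagIn_sum, hσBtr, Complex.one_re]
    have hμeq : ∀ i, hρBpsd.1.eigenvalues i
        = (1 - lam) * diagIn V φB i + lam * diagIn V σB i := by
      intro i
      rw [← diagIn_self hρBpsd.1 i, ← hV]
      rw [show ρB = ((1 - lam : ℝ) : ℂ) • φB + ((lam : ℝ) : ℂ) • σB from hρB_eq]
      exact diagIn_lin V (1 - lam) lam φB σB i
    have hconc : ∀ i, (1 - lam) * Real.negMulLog (diagIn V φB i)
        + lam * Real.negMulLog (diagIn V σB i)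
        ≤ Real.negMulLog (hρBpsd.1.eigenvalues i) := by
      intro i
      rw [hμeq i]
      have := Real.concaveOn_negMulLog.2 (Set.mem_Ici.mpr (ht0 i))
        (Set.mem_Ici.mpr (hs'0 i)) (by linarith : (0:ℝ) ≤ 1 - lam) h0 (by ring)
      simpa only [smul_eq_mul] using this
    have hsum : (1 - lam) * (∑ i, Real.negMulLog (diagIn V φB i))
        + lam * (∑ i, Real.negMulLog (diagIn V σB i)) ≤ Sμ := by
      rw [hSμ, Finset.mul_sum, Finset.mul_sum, ← Finset.sum_add_distrib]
      exact Finset.sum_le_sum fun i _ => hconc i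
    have hschur : Sν ≤ ∑ i, Real.negMulLog (diagIn V φB i) := schur_entropy hφBpsd V
    have hent' : 0 ≤ ∑ i, Real.negMulLog (diagIn V σB i) := ent_nonneg hs'0 hs'1
    nlinarith [mul_le_mul_of_nonneg_left hschur (by linarith : (0:ℝ) ≤ 1 - lam),
      mul_le_mul_of_nonneg_left hSνL h0]
  -- conclude
  rw [vnEntropy_eq hρBpsd.1, vnEntropy_eq hφBpsd.1, div_sub_div_same, abs_div,
    abs_of_pos hlog2, div_le_iff₀ hlog2]
  have hgoal : (ε * Real.logb 2 (Fintype.card B) + 1) * Real.log 2 = ε * L + Real.log 2 := by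
    rw [Real.logb, hL]
    field_simp
  rw [hgoal]
  have hlamεL : lam * L ≤ ε * L := mul_le_mul_of_nonneg_right h1 hL0
  rw [abs_le]
  constructor <;> [skip; skip] <;> linarith


end QI
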